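/- Let g : ℝ^d → ℝ be twice continuously differentiable on ball(x̄, δ) for some x̄ ∈ ℝ^d and δ > 0, with ∇g(x̄) = 0, and suppose the Hessian x ↦ ∇²g(x) is ρ-Lipschitz with respect to the operator norm on ball(x̄, δ), where ρ > 0. Let S ⊆ ℝ^d contain x̄ and let γ > 0 satisfy g(y) − g(x̄) ≥ (γ/2)·‖y − x̄‖² for every y ∈ S ∩ ball(x̄, δ). Then for every y ∈ S ∩ ball(x̄, min{δ, 9γ/(16ρ)}) one has g(x̄) ≥ g(y) + ⟨∇g(y), x̄ − y⟩, and consequently ‖∇g(y)‖ ≥ (γ/2)·‖y − x̄‖. -/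

import Mathlib

open Metric Set Filter
open scoped InnerProductSpace

abbrev Euc (d : ℕ) := EuclideanSpace ℝ (Fin d)

private lemma stmt14_aux1 (n a c A ρ γ : ℝ)
    (hq : γ/2 * n^2 ≤ a)
    (hB1 : -(ρ/6 * n^3) ≤ a - c/2) (hB2 : a - c/2 ≤ ρ/6 * n^3)
    (hE1 : -(ρ/2 * n^2 * n) ≤ A - c)
    (hcube : n^3 * (16*ρ) ≤ 9*γ*n^2)
    (hγn : 0 ≤ γ * n^2) : a ≤ A := by
  linarith

private lemma stmt14_aux2 (n N γ : ℝ) (h0 : 0 < n) (h1 : γ/2 * n^2 ≤ N * n) :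
    γ/2 * n ≤ N := by
  nlinarith

private lemma stmt14_aux3 (n ρ γ : ℝ) (hn0 : 0 ≤ n) (h : n * (16*ρ) ≤ 9*γ) :
    n^3 * (16*ρ) ≤ 9*γ*n^2 := by
  nlinarith [sq_nonneg n, mul_le_mul_of_nonneg_left h (sq_nonneg n)]

theorem stmt14 {d : ℕ} (g : Euc d → ℝ) (xbar : Euc d) (δ ρ γ : ℝ)
    (hδ : 0 < δ) (hρ : 0 < ρ) (hγ : 0 < γ)
    (hg : ContDiffOn ℝ 2 g (ball xbar δ))
    (hgrad0 : gradient g xbar = 0)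
    (hHess : ∀ a ∈ ball xbar δ, ∀ b ∈ ball xbar δ,
      ‖fderiv ℝ (gradient g) a - fderiv ℝ (gradient g) b‖ ≤ ρ * ‖a - b‖)
    (S : Set (Euc d)) (hxbarS : xbar ∈ S)
    (hquad : ∀ y ∈ S ∩ ball xbar δ, γ/2 * ‖y - xbar‖^2 ≤ g y - g xbar)
    (y : Euc d) (hy : y ∈ S ∩ ball xbar (min δ (9*γ/(16*ρ)))) :
    g y + ⟪ gradient g y, xbar - y ⟫_ℝ ≤ g xbar ∧ γ/2 * ‖y - xbar‖ ≤ ‖gradient g y‖ := by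
  obtain ⟨hyS, hyb⟩ := hy
  have hyδ : y ∈ ball xbar δ := ball_subset_ball (min_le_left _ _) hyb
  set u : Euc d := y - xbar with hu
  set G : Euc d → Euc d := gradient g with hG
  set H : Euc d →L[ℝ] Euc d := fderiv ℝ G xbar with hH
  have hn0 : (0:ℝ) ≤ ‖u‖ := norm_nonneg u
  have hnδ : ‖u‖ < δ := by
    have := mem_ball_iff_norm.mp hyδ; simpa [hu] using this
  have hnr : ‖u‖ < 9*γ/(16*ρ) := by
    have := mem_ball_iff_norm.mp hyb
    exact lt_of_lt_of_le (by simpa [hu] using this) (min_le_right _ _)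
  -- differentiability of g and G on the ball
  have hgdiff : ∀ z ∈ ball xbar δ, DifferentiableAt ℝ g z := fun z hz =>
    (hg.differentiableOn (by norm_num)).differentiableAt (isOpen_ball.mem_nhds hz)
  have hG1 : ContDiffOn ℝ 1 G (ball xbar δ) := by
    have hf : ContDiffOn ℝ 1 (fderiv ℝ g) (ball xbar δ) :=
      hg.fderiv_of_isOpen isOpen_ball (by norm_num)
    exact (InnerProductSpace.toDual ℝ (Euc d)).symm.contDiff.comp_contDiffOn hf
  have hGdiff : ∀ z ∈ ball xbar δ, DifferentiableAt ℝ G z := fun z hz =>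
    (hG1.differentiableOn (by norm_num)).differentiableAt (isOpen_ball.mem_nhds hz)
  have hmem : ∀ t ∈ Icc (0:ℝ) 1, xbar + t • u ∈ ball xbar δ := by
    intro t ht
    rw [mem_ball_iff_norm]
    have h1 : xbar + t • u - xbar = t • u := by abel
    rw [h1, norm_smul, Real.norm_eq_abs, abs_of_nonneg ht.1]
    calc t * ‖u‖ ≤ 1 * ‖u‖ := by nlinarith [ht.2]
      _ < δ := by simpa using hnδ
  have hline : ∀ t : ℝ, HasDerivAt (fun s : ℝ => xbar + s • u) u t := by
    intro t
    simpa using ((hasDerivAt_id t).smul_const u).const_add xbar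
  -- key lemma A : first-order Taylor bound for the gradient
  have keyA : ∀ t ∈ Icc (0:ℝ) 1,
      ‖G (xbar + t • u) - t • H u‖ ≤ ρ/2 * ‖u‖^2 * t^2 := by
    have hf : ∀ t ∈ Icc (0:ℝ) 1, HasDerivAt (fun s => G (xbar + s • u) - s • H u)
        ((fderiv ℝ G (xbar + t • u)) u - H u) t := by
      intro t ht
      have h1 : HasDerivAt (fun s => G (xbar + s • u)) ((fderiv ℝ G (xbar + t • u)) u) t :=
        HasFDerivAt.comp_hasDerivAt (l := G) (f := fun s => xbar + s • u) t
          (hGdiff _ (hmem t ht)).hasFDerivAt (hline t)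
      have h2 : HasDerivAt (fun s : ℝ => s • H u) (H u) t := by
        simpa using (hasDerivAt_id t).smul_const (H u)
      exact h1.sub h2
    refine image_norm_le_of_norm_deriv_right_le_deriv_boundary
      (f := fun s => G (xbar + s • u) - s • H u)
      (f' := fun s => (fderiv ℝ G (xbar + s • u)) u - H u)
      (fun t ht => (hf t ht).continuousAt.continuousWithinAt)
      (fun t ht => (hf t (Ico_subset_Icc_self ht)).hasDerivWithinAt)
      ?_ (B := fun t => ρ/2 * ‖u‖^2 * t^2) (B' := fun t => ρ * ‖u‖^2 * t) ?_ ?_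
    · simp [← hG, hgrad0]
    · intro t
      have h := (hasDerivAt_pow 2 t).const_mul (ρ/2 * ‖u‖^2)
      convert h using 1
      norm_num
      · rfl
      · rfl
      · ring
    · intro t ht
      have hz : xbar + t • u ∈ ball xbar δ := hmem t (Ico_subset_Icc_self ht)
      have e1 : (fderiv ℝ G (xbar + t • u)) u - H u
          = (fderiv ℝ G (xbar + t • u) - H) u := by
        simp [ContinuousLinearMap.sub_apply]
      show ‖(fderiv ℝ G (xbar + t • u)) u - H u‖ ≤ ρ * ‖u‖^2 * t
      rw [e1]
      calc ‖(fderiv ℝ G (xbar + t • u) - H) u‖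
          ≤ ‖fderiv ℝ G (xbar + t • u) - H‖ * ‖u‖ :=
            ContinuousLinearMap.le_opNorm _ _
        _ ≤ (ρ * ‖xbar + t • u - xbar‖) * ‖u‖ := by
            apply mul_le_mul_of_nonneg_right _ hn0
            exact hHess _ hz xbar (mem_ball_self hδ)
        _ = ρ * ‖u‖^2 * t := by
            have h1 : xbar + t • u - xbar = t • u := by abel
            rw [h1, norm_smul, Real.norm_eq_abs, abs_of_nonneg ht.1]
            ring
  -- key lemma B : second-order Taylor bound for g
  set c : ℝ := ⟪H u, u⟫_ℝ with hc
  have keyB : |g y - g xbar - c/2| ≤ ρ/6 * ‖u‖^3 := by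
    have hf : ∀ t ∈ Icc (0:ℝ) 1,
        HasDerivAt (fun s => g (xbar + s • u) - g xbar - s^2 * (c/2))
          (⟪G (xbar + t • u) - t • H u, u⟫_ℝ) t := by
      intro t ht
      have hz : xbar + t • u ∈ ball xbar δ := hmem t ht
      have h1 : HasDerivAt (fun s => g (xbar + s • u))
          (⟪G (xbar + t • u), u⟫_ℝ) t := by
        have hgr := (hgdiff _ hz).hasGradientAt
        have := hgr.hasFDerivAt.comp_hasDerivAt t (hline t)
        simpa [hG, Function.comp_def] using this
      have h2 : HasDerivAt (fun s : ℝ => s^2 * (c/2)) (t * c) t := by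
        have h := (hasDerivAt_pow 2 t).mul_const (c/2)
        convert h using 1
        norm_num
        · rfl
        · rfl
        · ring
      have h3 := (h1.sub_const (g xbar)).sub h2
      have e : ⟪G (xbar + t • u), u⟫_ℝ - t * c
          = ⟪G (xbar + t • u) - t • H u, u⟫_ℝ := by
        rw [inner_sub_left, real_inner_smul_left, hc]
      rw [← e]; exact h3
    have key := image_norm_le_of_norm_deriv_right_le_deriv_boundary
      (f := fun s => g (xbar + s • u) - g xbar - s^2 * (c/2))
      (f' := fun s => ⟪G (xbar + s • u) - s • H u, u⟫_ℝ)
      (fun t ht => (hf t ht).continuousAt.continuousWithinAt)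
      (fun t ht => (hf t (Ico_subset_Icc_self ht)).hasDerivWithinAt)
      (by simp) (B := fun t => ρ/6 * ‖u‖^3 * t^3) (B' := fun t => ρ/2 * ‖u‖^3 * t^2)
      (by
        intro t
        have h := (hasDerivAt_pow 3 t).const_mul (ρ/6 * ‖u‖^3)
        convert h using 1
        norm_num
        · rfl
        · rfl
        · ring)
      (by
        intro t ht
        calc ‖⟪G (xbar + t • u) - t • H u, u⟫_ℝ‖
            ≤ ‖G (xbar + t • u) - t • H u‖ * ‖u‖ := by
              rw [Real.norm_eq_abs]; exact abs_real_inner_le_norm _ _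
          _ ≤ (ρ/2 * ‖u‖^2 * t^2) * ‖u‖ := by
              exact mul_le_mul_of_nonneg_right (keyA t (Ico_subset_Icc_self ht)) hn0
          _ = ρ/2 * ‖u‖^3 * t^2 := by ring)
    have h1 := key (show (1:ℝ) ∈ Icc (0:ℝ) 1 by norm_num)
    have e1 : xbar + (1:ℝ) • u = y := by rw [one_smul, hu]; abel
    rw [e1] at h1
    simpa [Real.norm_eq_abs] using h1
  -- gradient bound at y
  have keyA1 : ‖G y - H u‖ ≤ ρ/2 * ‖u‖^2 := by
    have h1 := keyA 1 (show (1:ℝ) ∈ Icc (0:ℝ) 1 by norm_num)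
    have e1 : xbar + (1:ℝ) • u = y := by rw [one_smul, hu]; abel
    rw [e1, one_smul] at h1
    simpa using h1
  have hq : γ/2 * ‖u‖^2 ≤ g y - g xbar := hquad y ⟨hyS, hyδ⟩
  set A : ℝ := ⟪G y, u⟫_ℝ with hA
  have hE : |A - c| ≤ ρ/2 * ‖u‖^2 * ‖u‖ := by
    have e : A - c = ⟪G y - H u, u⟫_ℝ := by simp [hA, hc, inner_sub_left]
    rw [e]
    exact le_trans (abs_real_inner_le_norm _ _)
      (mul_le_mul_of_nonneg_right keyA1 hn0)
  clear_value A c H G u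
  have hn16 : ‖u‖ * (16 * ρ) < 9 * γ := (lt_div_iff₀ (by positivity)).mp hnr
  obtain ⟨hB1, hB2⟩ := abs_le.mp keyB
  obtain ⟨hE1, hE2⟩ := abs_le.mp hE
  have hcube : ‖u‖^3 * (16*ρ) ≤ 9*γ*‖u‖^2 := stmt14_aux3 _ _ _ hn0 hn16.le
  have main : g y - g xbar ≤ A :=
    stmt14_aux1 ‖u‖ (g y - g xbar) c A ρ γ hq hB1 hB2 hE1 hcube
      (mul_nonneg hγ.le (sq_nonneg ‖u‖))
  constructor
  · have e : ⟪G y, xbar - y⟫_ℝ = -A := by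
      rw [hA, ← inner_neg_right]
      congr 1
      rw [hu]; abel
    rw [e]
    linarith
  · have hCS : A ≤ ‖G y‖ * ‖u‖ := by rw [hA]; exact real_inner_le_norm _ _
    rcases eq_or_lt_of_le hn0 with h0 | h0
    · rw [← h0]
      simpa using norm_nonneg (G y)
    · have h1 : γ/2 * ‖u‖^2 ≤ ‖G y‖ * ‖u‖ := le_trans (le_trans hq main) hCS
      have h2 : γ/2 * ‖u‖ ≤ ‖G y‖ := stmt14_aux2 _ _ _ h0 h1
      simpa [hu, hG] using h2
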